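/- Let μₙ be a sequence of finite signed Borel measures on [a,b] converging weakly-star (in the dual of C[a,b]) to a signed measure μ, with sup_n ‖μₙ‖ < ∞. Then every subsequence of the distribution functions Φₙ(t) := μₙ([a,t)) contains a further subsequence converging to Φ_μ(t) := μ([a,t)) at every point of [a,b] outside some countable set (depending on the subsequence). -/

import Mathlib

open MeasureTheory Filter Topology
open scoped ENNReal

/-- Lebesgue integral of `g` against a finite signed measure, via the Jordan decomposition. -/
noncomputable def sintegral (s : SignedMeasure ℝ) (g : ℝ → ℝ) : ℝ :=
  (∫ t, g t ∂s.toJordanDecomposition.posPart) - ∫ t, g t ∂s.toJordanDecomposition.negPart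

namespace HellyAux

/-- piecewise linear bump: 1 on `(-∞,p]`, 0 on `[t,∞)`. -/
noncomputable def bump (p t x : ℝ) : ℝ := min 1 (max 0 ((t - x) / (t - p)))

lemma bump_continuous (p t : ℝ) : Continuous (bump p t) := by
  unfold bump
  exact (continuous_const.min ((continuous_const.max
    (((continuous_const.sub continuous_id).div_const _)))))

lemma bump_nonneg (p t x : ℝ) : 0 ≤ bump p t x :=
  le_min zero_le_one (le_max_left _ _)

lemma bump_le_one (p t x : ℝ) : bump p t x ≤ 1 := min_le_left _ _

lemma bump_abs_le (p t x : ℝ) : |bump p t x| ≤ 1 :=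
  abs_le.2 ⟨by linarith [bump_nonneg p t x], bump_le_one p t x⟩

lemma indicator_le_bump {p t : ℝ} (hpt : p < t) (x : ℝ) :
    (Set.Iic p).indicator (fun _ => (1:ℝ)) x ≤ bump p t x := by
  by_cases hx : x ≤ p
  · rw [Set.indicator_of_mem (Set.mem_Iic.mpr hx)]
    have h1 : (1:ℝ) ≤ (t - x) / (t - p) := by
      rw [le_div_iff₀ (by linarith)]; linarith
    have : (1:ℝ) ≤ max 0 ((t - x) / (t - p)) := le_trans h1 (le_max_right _ _)
    exact le_min le_rfl this
  · rw [Set.indicator_of_notMem (by simpa using hx)]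
    exact bump_nonneg _ _ _

lemma bump_le_indicator {p t : ℝ} (hpt : p < t) (x : ℝ) :
    bump p t x ≤ (Set.Iio t).indicator (fun _ => (1:ℝ)) x := by
  by_cases hx : x < t
  · rw [Set.indicator_of_mem (Set.mem_Iio.mpr hx)]; exact bump_le_one _ _ _
  · rw [Set.indicator_of_notMem (by simpa using hx)]
    push_neg at hx
    have : (t - x) / (t - p) ≤ 0 := div_nonpos_of_nonpos_of_nonneg (by linarith) (by linarith)
    simp only [bump]
    rw [max_eq_left this, min_eq_right (le_refl (0:ℝ) |>.trans (zero_le_one))]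

lemma integrable_bump (ρ : Measure ℝ) [IsFiniteMeasure ρ] (p t : ℝ) :
    Integrable (bump p t) ρ :=
  (integrable_const (1:ℝ)).mono' (bump_continuous p t).aestronglyMeasurable
    (Filter.Eventually.of_forall fun x => by simpa using bump_abs_le p t x)

lemma integral_bump_bounds (ρ : Measure ℝ) [IsFiniteMeasure ρ] {a p t : ℝ}
    (hρ : ρ (Set.Iio a) = 0) (hap : a ≤ p) (hpt : p < t) :
    (ρ (Set.Ico a p)).toReal ≤ ∫ x, bump p t x ∂ρ ∧
      ∫ x, bump p t x ∂ρ ≤ (ρ (Set.Ico a t)).toReal := by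
  have hint := integrable_bump ρ p t
  have hind1 : Integrable ((Set.Iic p).indicator (fun _ => (1:ℝ))) ρ :=
    (integrable_const (1:ℝ)).indicator measurableSet_Iic
  have hind2 : Integrable ((Set.Iio t).indicator (fun _ => (1:ℝ))) ρ :=
    (integrable_const (1:ℝ)).indicator measurableSet_Iio
  constructor
  · calc (ρ (Set.Ico a p)).toReal ≤ (ρ (Set.Iic p)).toReal := by
          apply ENNReal.toReal_mono (measure_ne_top _ _)
          exact measure_mono (fun x hx => hx.2.le)
      _ = ∫ x, (Set.Iic p).indicator (fun _ => (1:ℝ)) x ∂ρ := by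
          exact (integral_indicator_one measurableSet_Iic).symm
      _ ≤ ∫ x, bump p t x ∂ρ :=
          integral_mono hind1 hint (indicator_le_bump hpt)
  · calc ∫ x, bump p t x ∂ρ ≤ ∫ x, (Set.Iio t).indicator (fun _ => (1:ℝ)) x ∂ρ :=
          integral_mono hint hind2 (bump_le_indicator hpt)
      _ = (ρ (Set.Iio t)).toReal := by
          exact integral_indicator_one measurableSet_Iio
      _ = (ρ (Set.Ico a t)).toReal := by
          congr 1
          refine le_antisymm ?_ (measure_mono fun x hx => hx.2)
          calc ρ (Set.Iio t) = ρ (Set.Iio a ∪ Set.Ico a t) := by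
                rw [Set.Iio_union_Ico_eq_Iio (le_trans hap hpt.le)]
            _ ≤ ρ (Set.Iio a) + ρ (Set.Ico a t) := measure_union_le _ _
            _ = ρ (Set.Ico a t) := by rw [hρ, zero_add]

lemma tv_compl (s : SignedMeasure ℝ) (a b : ℝ)
    (h : ∀ A : Set ℝ, MeasurableSet A → A ∩ Set.Icc a b = ∅ → s A = 0) :
    s.totalVariation (Set.Icc a b)ᶜ = 0 := by
  obtain ⟨i, hi₁, hi₂, hi₃, hpos, hneg⟩ := s.toJordanDecomposition_spec
  have hm : MeasurableSet (Set.Icc a b)ᶜ := measurableSet_Icc.compl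
  rw [SignedMeasure.totalVariation, Measure.add_apply, hpos, hneg,
    SignedMeasure.toMeasureOfZeroLE_apply _ hi₂ hi₁ hm,
    SignedMeasure.toMeasureOfLEZero_apply _ hi₃ hi₁.compl hm]
  have h1 : s (i ∩ (Set.Icc a b)ᶜ) = 0 := by
    apply h _ (hi₁.inter hm)
    ext x; simp only [Set.mem_inter_iff, Set.mem_compl_iff, Set.mem_empty_iff_false,
      iff_false, not_and]
    tauto
  have h2 : s (iᶜ ∩ (Set.Icc a b)ᶜ) = 0 := by
    apply h _ (hi₁.compl.inter hm)
    ext x; simp only [Set.mem_inter_iff, Set.mem_compl_iff, Set.mem_empty_iff_false,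
      iff_false, not_and]
    tauto
  simp [h1, h2]

lemma jordan_apply (s : SignedMeasure ℝ) {A : Set ℝ} (hA : MeasurableSet A) :
    s A = (s.toJordanDecomposition.posPart A).toReal
      - (s.toJordanDecomposition.negPart A).toReal := by
  conv_lhs => rw [← s.toSignedMeasure_toJordanDecomposition]
  rw [JordanDecomposition.toSignedMeasure, Measure.toSignedMeasure_sub_apply hA]; rfl

lemma meas_Ico_diff (ρ : Measure ℝ) [IsFiniteMeasure ρ] {a p q : ℝ} (hap : a ≤ p) (hpq : p ≤ q) :
    (ρ (Set.Ico p q)).toReal = (ρ (Set.Ico a q)).toReal - (ρ (Set.Ico a p)).toReal := by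
  have hu : ρ (Set.Ico a q) = ρ (Set.Ico a p) + ρ (Set.Ico p q) := by
    rw [← Set.Ico_union_Ico_eq_Ico hap hpq,
      measure_union (Set.Ico_disjoint_Ico_same) measurableSet_Ico]
  rw [hu, ENNReal.toReal_add (measure_ne_top _ _) (measure_ne_top _ _)]
  ring

/-- Key estimate: distribution function value vs integral of the bump. -/
lemma signed_est (s : SignedMeasure ℝ) {a b p t : ℝ}
    (hvan : s.totalVariation (Set.Icc a b)ᶜ = 0) (hap : a ≤ p) (hpt : p < t) :
    |s (Set.Ico a t) - sintegral s (bump p t)| ≤ (s.totalVariation (Set.Ico p t)).toReal := by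
  set P := s.toJordanDecomposition.posPart with hP
  set N := s.toJordanDecomposition.negPart with hN
  have hPle : P ≤ s.totalVariation := Measure.le_add_right le_rfl
  have hNle : N ≤ s.totalVariation := Measure.le_add_left le_rfl
  have hPa : P (Set.Iio a) = 0 := le_antisymm (le_trans (le_trans (hPle _)
    (measure_mono (fun x hx => by
      simp only [Set.mem_compl_iff, Set.mem_Icc, not_and_or]
      exact Or.inl (not_le.2 hx)))) hvan.le) zero_le
  have hNa : N (Set.Iio a) = 0 := le_antisymm (le_trans (le_trans (hNle _)
    (measure_mono (fun x hx => by
      simp only [Set.mem_compl_iff, Set.mem_Icc, not_and_or]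
      exact Or.inl (not_le.2 hx)))) hvan.le) zero_le
  obtain ⟨hP1, hP2⟩ := integral_bump_bounds P hPa hap hpt
  obtain ⟨hN1, hN2⟩ := integral_bump_bounds N hNa hap hpt
  have hPd := meas_Ico_diff P hap hpt.le
  have hNd := meas_Ico_diff N hap hpt.le
  rw [jordan_apply s measurableSet_Ico, sintegral, ← hP, ← hN]
  have habs1 : |(P (Set.Ico a t)).toReal - ∫ x, bump p t x ∂P| ≤ (P (Set.Ico p t)).toReal := by
    rw [abs_le]; constructor
    · have := hP2; linarith [ENNReal.toReal_nonneg (a := P (Set.Ico p t))]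
    · rw [hPd]; linarith
  have habs2 : |(N (Set.Ico a t)).toReal - ∫ x, bump p t x ∂N| ≤ (N (Set.Ico p t)).toReal := by
    rw [abs_le]; constructor
    · have := hN2; linarith [ENNReal.toReal_nonneg (a := N (Set.Ico p t))]
    · rw [hNd]; linarith
  have htv : (s.totalVariation (Set.Ico p t)).toReal
      = (P (Set.Ico p t)).toReal + (N (Set.Ico p t)).toReal := by
    rw [SignedMeasure.totalVariation, Measure.add_apply,
      ENNReal.toReal_add (measure_ne_top _ _) (measure_ne_top _ _)]
  calc |(P (Set.Ico a t)).toReal - (N (Set.Ico a t)).toReal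
        - ((∫ x, bump p t x ∂P) - ∫ x, bump p t x ∂N)|
      = |((P (Set.Ico a t)).toReal - ∫ x, bump p t x ∂P)
        - ((N (Set.Ico a t)).toReal - ∫ x, bump p t x ∂N)| := by ring_nf
    _ ≤ |(P (Set.Ico a t)).toReal - ∫ x, bump p t x ∂P|
        + |(N (Set.Ico a t)).toReal - ∫ x, bump p t x ∂N| := abs_sub _ _
    _ ≤ _ := by rw [htv]; exact add_le_add habs1 habs2

end HellyAux

instance (s : MeasureTheory.SignedMeasure ℝ) :
    MeasureTheory.IsFiniteMeasure s.totalVariation := by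
  constructor
  rw [MeasureTheory.SignedMeasure.totalVariation, MeasureTheory.Measure.add_apply]
  exact ENNReal.add_lt_top.2 ⟨measure_lt_top _ _, measure_lt_top _ _⟩

/-- (Helly-type selection theorem.) Let `μₙ` be finite signed Borel measures
on `[a,b]` converging weakly-star (in the duality with `C[a,b]`) to `μ`, with
`sup_n ‖μₙ‖ < ∞`. Then every subsequence of the distribution functions `t ↦ μₙ([a,t))`
contains a further subsequence converging to `t ↦ μ([a,t))` at every point of `[a,b]`
outside some countable set (depending on the subsequence). -/
theorem helly_selection_signed_measures
    (a b : ℝ) (hab : a ≤ b)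
    (μn : ℕ → SignedMeasure ℝ) (μ : SignedMeasure ℝ)
    (hsupp : ∀ n, ∀ A : Set ℝ, MeasurableSet A → A ∩ Set.Icc a b = ∅ → μn n A = 0)
    (hsuppμ : ∀ A : Set ℝ, MeasurableSet A → A ∩ Set.Icc a b = ∅ → μ A = 0)
    (hbdd : ∃ C : ℝ≥0∞, C ≠ ⊤ ∧ ∀ n, (μn n).totalVariation (Set.Icc a b) ≤ C)
    (hconv : ∀ f : ℝ → ℝ, Continuous f →
      Tendsto (fun n => sintegral (μn n) f) atTop (𝓝 (sintegral μ f))) :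
    ∀ φ : ℕ → ℕ, StrictMono φ →
      ∃ (ψ : ℕ → ℕ) (S : Set ℝ), StrictMono ψ ∧ S.Countable ∧
        ∀ t ∈ Set.Icc a b, t ∉ S →
          Tendsto (fun m => μn (φ (ψ m)) (Set.Ico a t)) atTop (𝓝 (μ (Set.Ico a t))) := by
  intro φ hφ
  obtain ⟨C, hC, hCb⟩ := hbdd
  have hvan : ∀ n, (μn n).totalVariation (Set.Icc a b)ᶜ = 0 :=
    fun n => HellyAux.tv_compl _ a b (hsupp n)
  have hvanμ : μ.totalVariation (Set.Icc a b)ᶜ = 0 := HellyAux.tv_compl _ a b hsuppμ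
  set H : ℕ → ℚ → ℝ := fun n q => ((μn n).totalVariation (Set.Ico a (q:ℝ))).toReal with hHdef
  have htvle : ∀ n (A : Set ℝ), (μn n).totalVariation A ≤ C := by
    intro n A
    calc (μn n).totalVariation A ≤ (μn n).totalVariation Set.univ :=
          measure_mono (Set.subset_univ _)
      _ = (μn n).totalVariation (Set.Icc a b ∪ (Set.Icc a b)ᶜ) := by
          rw [Set.union_compl_self]
      _ ≤ (μn n).totalVariation (Set.Icc a b) + (μn n).totalVariation (Set.Icc a b)ᶜ :=
          measure_union_le _ _
      _ = (μn n).totalVariation (Set.Icc a b) := by rw [hvan n, add_zero]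
      _ ≤ C := hCb n
  have Hmem : ∀ m, (fun q => H (φ m) q) ∈ Set.univ.pi (fun _ : ℚ => Set.Icc (0:ℝ) C.toReal) := by
    intro m
    rw [Set.mem_univ_pi]
    intro q
    exact ⟨ENNReal.toReal_nonneg, ENNReal.toReal_mono hC (htvle _ _)⟩
  obtain ⟨L, hLmem, ψ, hψ, hLt⟩ :=
    (isCompact_univ_pi (fun _ : ℚ => isCompact_Icc)).tendsto_subseq Hmem
  have hLq : ∀ q : ℚ, Tendsto (fun m => H (φ (ψ m)) q) atTop (𝓝 (L q)) :=
    fun q => tendsto_pi_nhds.1 hLt q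
  have Hmono : ∀ n, ∀ p q : ℚ, (p:ℝ) ≤ (q:ℝ) → H n p ≤ H n q := fun n p q hpq =>
    ENNReal.toReal_mono (measure_ne_top _ _) (measure_mono (Set.Ico_subset_Ico_right hpq))
  have Lmono : ∀ p q : ℚ, (p:ℝ) ≤ (q:ℝ) → L p ≤ L q := fun p q hpq =>
    le_of_tendsto_of_tendsto' (hLq p) (hLq q) (fun m => Hmono _ p q hpq)
  have Lnonneg : ∀ q : ℚ, 0 ≤ L q := by
    intro q
    rw [Set.mem_univ_pi] at hLmem
    exact (hLmem q).1
  set SB : ℝ → Set ℝ := fun t => {y | ∃ q : ℚ, t < (q:ℝ) ∧ L q = y} with hSBdef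
  have hSBne : ∀ t, (SB t).Nonempty := fun t => by
    obtain ⟨q, hq⟩ := exists_rat_gt t; exact ⟨L q, q, hq, rfl⟩
  have hSBbdd : ∀ t, BddBelow (SB t) := fun t =>
    ⟨0, by rintro y ⟨q, _, rfl⟩; exact Lnonneg q⟩
  set Hbar : ℝ → ℝ := fun t => sInf (SB t) with hHbardef
  have Hbar_mono : Monotone Hbar := by
    intro t t' htt'
    exact csInf_le_csInf (hSBbdd t) (hSBne t')
      (by rintro y ⟨q, hq, rfl⟩; exact ⟨q, lt_of_le_of_lt htt' hq, rfl⟩)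
  have Hbar_le : ∀ (t : ℝ) (q : ℚ), t < (q:ℝ) → Hbar t ≤ L q :=
    fun t q h => csInf_le (hSBbdd t) ⟨q, h, rfl⟩
  have le_Hbar : ∀ (q : ℚ) (t : ℝ), (q:ℝ) < t → L q ≤ Hbar t := by
    intro q t h
    apply le_csInf (hSBne t)
    rintro y ⟨r, hr, rfl⟩
    exact Lmono q r (le_of_lt (lt_trans h hr))
  set G : ℝ → ℝ := fun t => (μ.totalVariation (Set.Ico a t)).toReal with hGdef
  have Gmono : Monotone G := fun t t' h =>
    ENNReal.toReal_mono (measure_ne_top _ _) (measure_mono (Set.Ico_subset_Ico_right h))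
  refine ⟨ψ, {x | ¬ContinuousAt Hbar x} ∪ {x | ¬ContinuousAt G x}, hψ,
    (Hbar_mono.countable_not_continuousAt).union (Gmono.countable_not_continuousAt), ?_⟩
  intro t ht htS
  rcases eq_or_lt_of_le ht.1 with rfl | hat
  · have h0 : ∀ n, μn n (Set.Ico a a) = 0 := fun n => by
      rw [Set.Ico_self]; exact (μn n).empty
    have h0' : μ (Set.Ico a a) = 0 := by rw [Set.Ico_self]; exact μ.empty
    simp only [h0, h0']
    exact tendsto_const_nhds
  rw [Set.mem_union] at htS
  push_neg at htS
  have hContH : ContinuousAt Hbar t := not_not.1 htS.1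
  have hContG : ContinuousAt G t := not_not.1 htS.2
  rw [Metric.tendsto_atTop]
  intro ε hε
  have hε8 : 0 < ε/8 := by linarith
  obtain ⟨δ₁, hδ₁, hH1⟩ := Metric.continuousAt_iff.1 hContH (ε/8) hε8
  obtain ⟨δ₂, hδ₂, hG1⟩ := Metric.continuousAt_iff.1 hContG (ε/8) hε8
  set δ := min δ₁ δ₂ with hδdef
  have hδ : 0 < δ := lt_min hδ₁ hδ₂
  have hδd1 : δ ≤ δ₁ := min_le_left _ _
  have hδd2 : δ ≤ δ₂ := min_le_right _ _
  obtain ⟨p, hp1, hp2⟩ := exists_rat_btwn (show max (t - δ/2) a < t from max_lt (by linarith) hat)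
  obtain ⟨q, hq1, hq2⟩ := exists_rat_btwn (show t < t + δ/2 by linarith)
  have hp1' : t - δ/2 < (p:ℝ) := lt_of_le_of_lt (le_max_left _ _) hp1
  have hap : a ≤ (p:ℝ) := le_of_lt (lt_of_le_of_lt (le_max_right _ _) hp1)
  have hpt : (p:ℝ) < t := hp2
  have hLqb : L q ≤ Hbar t + ε/8 := by
    have h1 : L q ≤ Hbar (t + 3*δ/4) := le_Hbar q _ (by linarith)
    have h2 : dist (t + 3*δ/4) t < δ₁ := by
      rw [Real.dist_eq, abs_lt]; constructor <;> linarith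
    have h3 := hH1 h2
    rw [Real.dist_eq, abs_lt] at h3
    linarith
  have hLpb : Hbar t - ε/8 ≤ L p := by
    have h1 : Hbar (t - 3*δ/4) ≤ L p := Hbar_le _ p (by linarith)
    have h2 : dist (t - 3*δ/4) t < δ₁ := by
      rw [Real.dist_eq, abs_lt]; constructor <;> linarith
    have h3 := hH1 h2
    rw [Real.dist_eq, abs_lt] at h3
    linarith
  have hGb : G t - G (p:ℝ) < ε/8 := by
    have h2 : dist (p:ℝ) t < δ₂ := by
      rw [Real.dist_eq, abs_lt]; constructor <;> linarith
    have h3 := hG1 h2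
    rw [Real.dist_eq, abs_lt] at h3
    linarith
  have hbump2 : Tendsto (fun m => sintegral (μn (φ (ψ m))) (HellyAux.bump (p:ℝ) t)) atTop
      (𝓝 (sintegral μ (HellyAux.bump (p:ℝ) t))) :=
    (hconv (HellyAux.bump (p:ℝ) t) (HellyAux.bump_continuous _ _)).comp
      ((hφ.comp hψ).tendsto_atTop)
  obtain ⟨M₁, hM₁⟩ := Metric.tendsto_atTop.1 hbump2 (ε/8) hε8
  obtain ⟨M₂, hM₂⟩ := Metric.tendsto_atTop.1 (hLq p) (ε/8) hε8
  obtain ⟨M₃, hM₃⟩ := Metric.tendsto_atTop.1 (hLq q) (ε/8) hε8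
  refine ⟨max M₁ (max M₂ M₃), fun m hm => ?_⟩
  set s := μn (φ (ψ m)) with hsdef
  have e1 : |s (Set.Ico a t) - sintegral s (HellyAux.bump (p:ℝ) t)|
      ≤ (s.totalVariation (Set.Ico (p:ℝ) t)).toReal :=
    HellyAux.signed_est s (hvan _) hap hpt
  have e3 : |μ (Set.Ico a t) - sintegral μ (HellyAux.bump (p:ℝ) t)|
      ≤ (μ.totalVariation (Set.Ico (p:ℝ) t)).toReal :=
    HellyAux.signed_est μ hvanμ hap hpt
  have e1' : (s.totalVariation (Set.Ico (p:ℝ) t)).toReal ≤ H (φ (ψ m)) q - H (φ (ψ m)) p := by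
    calc (s.totalVariation (Set.Ico (p:ℝ) t)).toReal
        ≤ (s.totalVariation (Set.Ico (p:ℝ) (q:ℝ))).toReal :=
          ENNReal.toReal_mono (measure_ne_top _ _)
            (measure_mono (Set.Ico_subset_Ico_right (le_of_lt hq1)))
      _ = H (φ (ψ m)) q - H (φ (ψ m)) p :=
          HellyAux.meas_Ico_diff _ hap (le_of_lt (hpt.trans hq1))
  have e3' : (μ.totalVariation (Set.Ico (p:ℝ) t)).toReal = G t - G (p:ℝ) :=
    HellyAux.meas_Ico_diff _ hap (le_of_lt hpt)
  have h2 := hM₁ m (le_trans (le_max_left _ _) hm)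
  rw [Real.dist_eq] at h2
  have hq' := hM₃ m (le_trans (le_trans (le_max_right _ _) (le_max_right _ _)) hm)
  have hp' := hM₂ m (le_trans (le_trans (le_max_left _ _) (le_max_right _ _)) hm)
  rw [Real.dist_eq, abs_lt] at hq' hp'
  have hHq : H (φ (ψ m)) q - H (φ (ψ m)) p ≤ ε/2 := by
    have := hLqb; have := hLpb
    linarith [hq'.1, hq'.2, hp'.1, hp'.2]
  rw [Real.dist_eq]
  have tri : |s (Set.Ico a t) - μ (Set.Ico a t)|
      ≤ |s (Set.Ico a t) - sintegral s (HellyAux.bump (p:ℝ) t)|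
        + |sintegral s (HellyAux.bump (p:ℝ) t) - sintegral μ (HellyAux.bump (p:ℝ) t)|
        + |μ (Set.Ico a t) - sintegral μ (HellyAux.bump (p:ℝ) t)| := by
    have t1 : |s (Set.Ico a t) - μ (Set.Ico a t)|
        ≤ |s (Set.Ico a t) - sintegral μ (HellyAux.bump (p:ℝ) t)|
          + |sintegral μ (HellyAux.bump (p:ℝ) t) - μ (Set.Ico a t)| := abs_sub_le _ _ _
    have t2 : |s (Set.Ico a t) - sintegral μ (HellyAux.bump (p:ℝ) t)|
        ≤ |s (Set.Ico a t) - sintegral s (HellyAux.bump (p:ℝ) t)|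
          + |sintegral s (HellyAux.bump (p:ℝ) t) - sintegral μ (HellyAux.bump (p:ℝ) t)| :=
      abs_sub_le _ _ _
    have t3 : |sintegral μ (HellyAux.bump (p:ℝ) t) - μ (Set.Ico a t)|
        = |μ (Set.Ico a t) - sintegral μ (HellyAux.bump (p:ℝ) t)| := abs_sub_comm _ _
    linarith
  have : |s (Set.Ico a t) - μ (Set.Ico a t)| < ε := by
    have b1 : |s (Set.Ico a t) - sintegral s (HellyAux.bump (p:ℝ) t)| ≤ ε/2 :=
      le_trans e1 (le_trans e1' hHq)
    have b3 : |μ (Set.Ico a t) - sintegral μ (HellyAux.bump (p:ℝ) t)| ≤ ε/8 := by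
      rw [e3'] at e3; linarith
    linarith
  exact this
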